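/- Let φ be the morphism φ(A) = A^p B, φ(B) = A^q B with p > q ≥ 1 and U_n = |φ^n(A)|. Define w^(0) = B and w^(n) = B·φ(w^(n-1)). If n ∈ ℕ and N ≥ 0 satisfy U_N ≤ n < U_{N+1}, then |w^(N)| ≤ n < |w^(N+2)|. -/

import Mathlib

/-- Number of occurrences of the letter `A` (encoded as `false`). -/
def countA (w : List Bool) : ℕ := w.count false

/-- Number of occurrences of the letter `B` (encoded as `true`). -/
def countB (w : List Bool) : ℕ := w.count true

/-- Extension of a morphism (given on letters) to finite words. -/
def applyM (φ : Bool → List Bool) (w : List Bool) : List Bool := (w.map φ).flatten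

/-- `w` is a factor of the infinite word `u`. -/
def IsFactor (u : ℕ → Bool) (w : List Bool) : Prop :=
  ∃ i, w = (List.range w.length).map (fun j => u (i + j))

/-- The prefix of length `n` of the infinite word `u`. -/
def prefWord (u : ℕ → Bool) (n : ℕ) : List Bool := (List.range n).map u

/-- The finite word `w` is a prefix of the infinite word `u`. -/
def IsPrefixOf (w : List Bool) (u : ℕ → Bool) : Prop := w = prefWord u w.length

/-- Abelian complexity: number of Parikh vectors of factors of length `n`. -/
noncomputable def AC (u : ℕ → Bool) (n : ℕ) : ℕ :=
  Set.ncard {P : ℕ × ℕ | ∃ w, IsFactor u w ∧ w.length = n ∧ P = (countA w, countB w)}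

/-- `n`-fold iterate of the morphism `φ` applied to the letter `a`. -/
def iterW (φ : Bool → List Bool) (n : ℕ) (a : Bool) : List Bool := (applyM φ)^[n] [a]

/-- The morphism `A ↦ AᵖB, B ↦ A^q` (simple Parry case). -/
def simpleM (p q : ℕ) : Bool → List Bool
  | false => List.replicate p false ++ [true]
  | true  => List.replicate q false

/-- The morphism `A ↦ AᵖB, B ↦ A^qB` (non-simple Parry case). -/
def nonsimpleM (p q : ℕ) : Bool → List Bool
  | false => List.replicate p false ++ [true]
  | true  => List.replicate q false ++ [true]

/-- Greedy digits `(d_N, …, d_0)` of `x` in the base given by `U`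
    (assuming `U 0 = 1`): `d_j = ⌊x_j / U_j⌋`, `x_{j-1} = x_j mod U_j`. -/
def gdigits (U : ℕ → ℕ) : ℕ → ℕ → List ℕ
  | 0, x => [x]
  | j+1, x => x / U (j+1) :: gdigits U j (x % U (j+1))

/-- The digit `d_j` of the normal `U`-representation `(d_N, …, d_0)` of `n`. -/
def dig (U : ℕ → ℕ) (N n j : ℕ) : ℕ := (gdigits U N n).getD (N - j) 0

/-- The words `w⁽ⁿ⁾` of the non-simple Parry case: `w⁽⁰⁾ = B`, `w⁽ⁿ⁾ = B·φ(w⁽ⁿ⁻¹⁾)`. -/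
def wNon (φ : Bool → List Bool) : ℕ → List Bool
  | 0 => [true]
  | n+1 => true :: applyM φ (wNon φ n)

/-- The words `w⁽ᴺ⁾ = B·φ(A^{q-1})·φ³(A^{q-1})⋯φ^{2N-1}(A^{q-1})` of the simple Parry case. -/
def wSim (φ : Bool → List Bool) (q : ℕ) (N : ℕ) : List Bool :=
  true :: ((List.range N).map
    (fun k => (applyM φ)^[2*k+1] (List.replicate (q-1) false))).flatten
lemma applyM_append' (φ : Bool → List Bool) (u v : List Bool) :
    applyM φ (u ++ v) = applyM φ u ++ applyM φ v := by
  simp [applyM]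

lemma iter_applyM_append (φ : Bool → List Bool) (m : ℕ) (u v : List Bool) :
    (applyM φ)^[m] (u ++ v) = (applyM φ)^[m] u ++ (applyM φ)^[m] v := by
  induction m generalizing u v with
  | zero => rfl
  | succ m ih => simp [Function.iterate_succ_apply, applyM_append', ih]

lemma iter_applyM_nil (φ : Bool → List Bool) (m : ℕ) :
    (applyM φ)^[m] ([] : List Bool) = [] := by
  induction m with
  | zero => rfl
  | succ m ih => simp [Function.iterate_succ_apply, applyM, ih]

lemma iter_replicate_len (φ : Bool → List Bool) (m k : ℕ) (a : Bool) :
    ((applyM φ)^[m] (List.replicate k a)).length = k * ((applyM φ)^[m] [a]).length := by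
  induction k with
  | zero => simp [iter_applyM_nil]
  | succ k ih =>
    have : List.replicate (k+1) a = [a] ++ List.replicate k a := by
      simp [List.replicate_succ]
    rw [this, iter_applyM_append, List.length_append, ih]
    ring

lemma applyM_single (φ : Bool → List Bool) (a : Bool) : applyM φ [a] = φ a := by
  simp [applyM]

lemma U_rec (p q : ℕ) (φ : Bool → List Bool) (hφ : φ = nonsimpleM p q) (m : ℕ) :
    (iterW φ (m+1) false).length
      = p * (iterW φ m false).length + (iterW φ m true).length := by
  have hf : φ false = List.replicate p false ++ [true] := by rw [hφ]; rfl
  have : iterW φ (m+1) false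
      = (applyM φ)^[m] (List.replicate p false) ++ (applyM φ)^[m] [true] := by
    rw [iterW, Function.iterate_succ_apply, applyM_single, hf, iter_applyM_append]
  rw [this, List.length_append, iter_replicate_len]
  rfl

lemma V_rec (p q : ℕ) (φ : Bool → List Bool) (hφ : φ = nonsimpleM p q) (m : ℕ) :
    (iterW φ (m+1) true).length
      = q * (iterW φ m false).length + (iterW φ m true).length := by
  have hf : φ true = List.replicate q false ++ [true] := by rw [hφ]; rfl
  have : iterW φ (m+1) true
      = (applyM φ)^[m] (List.replicate q false) ++ (applyM φ)^[m] [true] := by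
    rw [iterW, Function.iterate_succ_apply, applyM_single, hf, iter_applyM_append]
  rw [this, List.length_append, iter_replicate_len]
  rfl

lemma wNon_succ (φ : Bool → List Bool) (N : ℕ) :
    wNon φ (N+1) = wNon φ N ++ iterW φ (N+1) true := by
  induction N with
  | zero =>
    show true :: applyM φ [true] = [true] ++ (applyM φ)^[1] [true]
    simp
  | succ N ih =>
    have h2 : applyM φ (iterW φ (N+1) true) = iterW φ (N+2) true := by
      show applyM φ ((applyM φ)^[N+1] [true]) = (applyM φ)^[N+2] [true]
      exact (Function.iterate_succ_apply' _ _ _).symm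
    calc wNon φ (N+2) = true :: applyM φ (wNon φ (N+1)) := rfl
      _ = true :: applyM φ (wNon φ N ++ iterW φ (N+1) true) := by rw [ih]
      _ = true :: (applyM φ (wNon φ N) ++ iterW φ (N+2) true) := by
          rw [applyM_append', h2]
      _ = wNon φ (N+1) ++ iterW φ (N+2) true := by simp [wNon]

/-- if `U_N ≤ n < U_{N+1}` then `|w⁽ᴺ⁾| ≤ n < |w⁽ᴺ⁺²⁾|` (non-simple case). -/
theorem stmt8 (p q : ℕ) (hq : 1 ≤ q) (hpq : q < p)
    (φ : Bool → List Bool) (hφ : φ = nonsimpleM p q)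
    (U : ℕ → ℕ) (hU : ∀ m, U m = (iterW φ m false).length)
    (n N : ℕ) (hn : 0 < n) (h1 : U N ≤ n) (h2 : n < U (N+1)) :
    (wNon φ N).length ≤ n ∧ n < (wNon φ (N+2)).length := by
  set U' : ℕ → ℕ := fun m => (iterW φ m false).length with hU'
  set V : ℕ → ℕ := fun m => (iterW φ m true).length with hV
  have hUrec : ∀ m, U' (m+1) = p * U' m + V m := fun m => U_rec p q φ hφ m
  have hVrec : ∀ m, V (m+1) = q * U' m + V m := fun m => V_rec p q φ hφ m
  have hL : ∀ m, (wNon φ (m+1)).length = (wNon φ m).length + V (m+1) := by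
    intro m; rw [wNon_succ, List.length_append]
  -- claim 1 : |w⁽ᴺ⁾| ≤ U' N
  have claim1 : ∀ m, (wNon φ m).length ≤ U' m := by
    intro m
    induction m with
    | zero => simp [wNon, U', iterW]
    | succ m ih =>
      rw [hL, hUrec, hVrec]
      have h1 : (wNon φ m).length + (q * U' m + V m) ≤ U' m + (q * U' m + V m) := by
        omega
      have h2 : U' m + (q * U' m + V m) ≤ p * U' m + V m := by
        have : (1 + q) * U' m ≤ p * U' m :=
          Nat.mul_le_mul_right _ (by omega)
        nlinarith
      omega
  -- claim 2 : U' (N+1) ≤ |w⁽ᴺ⁺²⁾|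
  have claim2 : U' (N+1) ≤ (wNon φ (N+2)).length := by
    have hL2 : (wNon φ (N+2)).length = (wNon φ (N+1)).length + V (N+2) := hL (N+1)
    have hv : V (N+2) = q * U' (N+1) + V (N+1) := hVrec (N+1)
    have : U' (N+1) ≤ q * U' (N+1) := Nat.le_mul_of_pos_left _ (by omega)
    omega
  have e1 : U N = U' N := hU N
  have e2 : U (N+1) = U' (N+1) := hU (N+1)
  have c1 := claim1 N
  omega
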